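/- Let X be a binomial random variable with parameters n-1 and r/n, where 0 < r ≤ k ≤ n. Then (1/r)·E[min(Y,k)] = E[min(X+1,k)/(X+1)], where Y ~ Binomial(n, r/n). Moreover E[min(X+1,k)/(X+1)] is non-increasing in r on (0,k]. -/

import Mathlib

open Finset

noncomputable def B (m : ℕ) (h : ℕ → ℝ) (p : ℝ) : ℝ :=
  ∑ t ∈ Finset.range (m + 1), (m.choose t : ℝ) * p ^ t * (1 - p) ^ (m - t) * h t

lemma B_succ (m : ℕ) (h : ℕ → ℝ) (p : ℝ) :
    B (m + 1) h p = (1 - p) * B m h p + p * B m (fun t => h (t + 1)) p := by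
  unfold B
  rw [Finset.sum_range_succ' (fun t => ((m+1).choose t : ℝ) * p ^ t * (1 - p) ^ (m + 1 - t) * h t) (m+1)]
  have split : ∀ t ∈ Finset.range (m+1),
      ((m+1).choose (t+1) : ℝ) * p ^ (t+1) * (1 - p) ^ (m + 1 - (t+1)) * h (t+1)
      = p * ((m.choose t : ℝ) * p ^ t * (1 - p) ^ (m - t) * h (t+1))
        + (m.choose (t+1) : ℝ) * p ^ (t+1) * (1 - p) ^ (m - t) * h (t+1) := by
    intro t ht
    have : (m + 1 - (t+1)) = m - t := by omega
    rw [this, Nat.choose_succ_succ]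
    push_cast
    ring
  rw [Finset.sum_congr rfl split, Finset.sum_add_distrib]
  -- second piece: top term vanishes
  have h2 : ∑ t ∈ Finset.range (m+1), (m.choose (t+1) : ℝ) * p ^ (t+1) * (1 - p) ^ (m - t) * h (t+1)
      = ∑ t ∈ Finset.range m, (m.choose (t+1) : ℝ) * p ^ (t+1) * (1 - p) ^ (m - t) * h (t+1) := by
    rw [Finset.sum_range_succ]
    simp
  rw [h2]
  have h3 : (1 - p) * ∑ t ∈ Finset.range (m+1), (m.choose t : ℝ) * p ^ t * (1 - p) ^ (m - t) * h t
      = ∑ t ∈ Finset.range m, (m.choose (t+1) : ℝ) * p ^ (t+1) * (1 - p) ^ (m - t) * h (t+1)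
        + ((m+1).choose 0 : ℝ) * p ^ 0 * (1 - p) ^ (m + 1 - 0) * h 0 := by
    rw [Finset.mul_sum, Finset.sum_range_succ' (fun t => (1-p) * ((m.choose t : ℝ) * p ^ t * (1 - p) ^ (m - t) * h t)) m]
    congr 1
    · apply Finset.sum_congr rfl
      intro t ht
      have ht' : t < m := Finset.mem_range.mp ht
      have : m - t = (m - (t+1)) + 1 := by omega
      rw [this, pow_succ]
      ring
    · simp [pow_succ]
      ring
  rw [h3, Finset.mul_sum]
  ring

lemma B_le (m : ℕ) (h₁ h₂ : ℕ → ℝ) (hle : ∀ t, h₁ t ≤ h₂ t) (p : ℝ)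
    (hp0 : 0 ≤ p) (hp1 : p ≤ 1) : B m h₁ p ≤ B m h₂ p := by
  apply Finset.sum_le_sum
  intro t ht
  have hw : 0 ≤ (m.choose t : ℝ) * p ^ t * (1 - p) ^ (m - t) :=
    mul_nonneg (mul_nonneg (Nat.cast_nonneg _) (pow_nonneg hp0 _))
      (pow_nonneg (by linarith) _)
  exact mul_le_mul_of_nonneg_left (hle t) hw

lemma B_anti (m : ℕ) : ∀ (h : ℕ → ℝ), (∀ t, h (t + 1) ≤ h t) →
    ∀ p q : ℝ, 0 ≤ p → p ≤ q → q ≤ 1 → B m h q ≤ B m h p := by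
  induction m with
  | zero =>
      intro h hmono p q hp hpq hq
      simp [B]
  | succ m ih =>
      intro h hmono p q hp hpq hq
      rw [B_succ, B_succ]
      have hq1 : 0 ≤ 1 - q := by linarith
      have hp1 : p ≤ 1 := le_trans hpq hq
      have h1 : B m h q ≤ B m h p := ih h hmono p q hp hpq hq
      have h2 : B m (fun t => h (t+1)) q ≤ B m (fun t => h (t+1)) p :=
        ih _ (fun t => hmono (t+1)) p q hp hpq hq
      have h3 : B m (fun t => h (t+1)) p ≤ B m h p :=
        B_le m _ _ (fun t => hmono t) p hp hp1
      nlinarith [h1, h2, h3]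

lemma hfun_anti (k : ℕ) (t : ℕ) :
    ((min (t + 1 + 1) k : ℕ) : ℝ) / ((t : ℝ) + 1 + 1) ≤
      ((min (t + 1) k : ℕ) : ℝ) / ((t : ℝ) + 1) := by
  rcases le_or_gt k (t + 1) with hc | hc
  · have e1 : min (t + 1) k = k := min_eq_right hc
    have e2 : min (t + 1 + 1) k = k := min_eq_right (by omega)
    rw [e1, e2]
    apply div_le_div_of_nonneg_left (by positivity) (by positivity)
    linarith
  · have e1 : min (t + 1) k = t + 1 := min_eq_left hc.le
    rw [e1]
    have : ((t:ℝ) + 1) / ((t:ℝ)+1) = 1 := by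
      field_simp
    rw [show (((t+1:ℕ)):ℝ) = (t:ℝ)+1 by push_cast; ring] at *
    rw [this]
    rw [div_le_one (by positivity)]
    have : (min (t + 1 + 1) k : ℕ) ≤ t + 1 + 1 := min_le_left _ _
    exact_mod_cast this


/-- `E[min(X+1,k)/(X+1)]` for `X ~ Binomial(n-1, r/n)`. -/
noncomputable def g (n k : ℕ) (r : ℝ) : ℝ :=
  ∑ t ∈ Finset.range n,
    ((n - 1).choose t : ℝ) * (r / n) ^ t * (1 - r / n) ^ (n - 1 - t) *
      ((min (t + 1) k : ℕ) / ((t : ℝ) + 1))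

theorem binomial_identity_and_monotone (n k : ℕ) (hn : 1 ≤ n) (hk : 1 ≤ k)
    (hkn : k ≤ n) :
    (∀ r : ℝ, 0 < r → r ≤ (k : ℝ) →
      (1 / r) * ∑ t ∈ Finset.range (n + 1),
          (n.choose t : ℝ) * (r / n) ^ t * (1 - r / n) ^ (n - t) * (min t k : ℕ)
        = g n k r) ∧
    (∀ r₁ r₂ : ℝ, 0 < r₁ → r₁ ≤ r₂ → r₂ ≤ (k : ℝ) → g n k r₂ ≤ g n k r₁) := by
  have hn0 : (0:ℝ) < n := by exact_mod_cast hn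
  have hg : ∀ r : ℝ, g n k r
      = B (n - 1) (fun t => ((min (t + 1) k : ℕ) : ℝ) / ((t : ℝ) + 1)) (r / n) := by
    intro r
    unfold g B
    rw [Nat.sub_add_cancel hn]
  constructor
  · intro r hr hrk
    rw [hg]
    unfold B
    rw [Nat.sub_add_cancel hn,
      Finset.sum_range_succ' (fun t => (n.choose t : ℝ) * (r / n) ^ t * (1 - r / n) ^ (n - t) * ((min t k : ℕ):ℝ)) n]
    simp only [Nat.zero_min, Nat.cast_zero, mul_zero, add_zero]
    rw [Finset.mul_sum]
    apply Finset.sum_congr rfl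
    intro t ht
    have he : n - (t + 1) = n - 1 - t := by omega
    have key : ((n.choose (t+1) : ℝ)) * ((t:ℝ) + 1) = (n : ℝ) * (((n-1).choose t : ℝ)) := by
      have h := Nat.add_one_mul_choose_eq (n-1) t
      rw [Nat.sub_add_cancel hn] at h
      have := congrArg (Nat.cast : ℕ → ℝ) h
      push_cast at this
      linarith
    rw [he, pow_succ]
    have ht1 : ((t:ℝ) + 1) ≠ 0 := by positivity
    set M := ((min (t + 1) k : ℕ) : ℝ) with hM
    field_simp
    linear_combination (((↑n - r) / ↑n) ^ (n - 1 - t) * M) * key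
  · intro r₁ r₂ h1 h12 h2k
    rw [hg, hg]
    apply B_anti (n-1) _ (fun t => by simp only [Nat.cast_add, Nat.cast_one]; exact hfun_anti k t)
    · positivity
    · gcongr
    · rw [div_le_one hn0]
      exact le_trans h2k (by exact_mod_cast hkn)
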